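/- arXiv:2001.05669 — 2 statements merged into one kernel-verified Lean document; each statement's English description precedes it below -/
import Mathlib

section
/- Let A be an invertible alternating 2n × 2n complex matrix and B an alternating 2n × 2n complex matrix, and set R = B·A⁻¹. Then for every λ ∈ ℂ, the dimension of the eigenspace ker(R − λ·I) is even. In particular, every eigenvalue of R has even geometric multiplicity. -/
open Matrix

open Module

lemma skew_dot {m : Type*} [Fintype m] (M : Matrix m m ℂ) (h : Mᵀ = -M)
    (x y : m → ℂ) : x ⬝ᵥ M *ᵥ y = -(y ⬝ᵥ M *ᵥ x) := by
  rw [Matrix.dotProduct_mulVec, ← Matrix.mulVec_transpose, h, Matrix.neg_mulVec,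
    neg_dotProduct, dotProduct_comm]

lemma dot_sum_right {m ι : Type*} [Fintype m] (s : Finset ι) (x : m → ℂ) (f : ι → m → ℂ) :
    x ⬝ᵥ (∑ j ∈ s, f j) = ∑ j ∈ s, x ⬝ᵥ f j := by
  simp only [dotProduct, Finset.sum_apply, Finset.mul_sum]
  exact Finset.sum_comm

lemma sum_dot_left {m ι : Type*} [Fintype m] (s : Finset ι) (x : m → ℂ) (f : ι → m → ℂ) :
    (∑ j ∈ s, f j) ⬝ᵥ x = ∑ j ∈ s, f j ⬝ᵥ x := by
  simp only [dotProduct, Finset.sum_apply, Finset.sum_mul]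
  exact Finset.sum_comm

/-- The rank of a complex skew-symmetric matrix is even. -/
lemma skew_rank_even {m : Type*} [Fintype m] [DecidableEq m]
    (M : Matrix m m ℂ) (h : Mᵀ = -M) : Even M.rank := by
  classical
  set K := LinearMap.ker M.mulVecLin with hK
  obtain ⟨W, hW⟩ := K.exists_isCompl
  have hrank : M.rank = finrank ℂ W := by
    have h1 : M.rank + finrank ℂ K = finrank ℂ (m → ℂ) := by
      rw [Matrix.rank]; exact LinearMap.finrank_range_add_finrank_ker _
    have h2 : finrank ℂ K + finrank ℂ W = finrank ℂ (m → ℂ) :=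
      Submodule.finrank_add_eq_of_isCompl hW
    omega
  rw [hrank]
  set d := finrank ℂ W with hd
  let b : Basis (Fin d) ℂ W := finBasis ℂ W
  set N : Matrix (Fin d) (Fin d) ℂ :=
    Matrix.of fun i j => (b i : m → ℂ) ⬝ᵥ M *ᵥ (b j : m → ℂ) with hN
  have hdet : N.det ≠ 0 := by
    intro h0
    obtain ⟨v, hv, hNv⟩ := (Matrix.exists_mulVec_eq_zero_iff).2 h0
    set w : W := ∑ j, v j • b j with hw
    have hwcoe : (w : m → ℂ) = ∑ j, v j • (b j : m → ℂ) := by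
      rw [hw]; push_cast; rfl
    have hpair : ∀ i : Fin d, (b i : m → ℂ) ⬝ᵥ M *ᵥ (w : m → ℂ) = 0 := by
      intro i
      have hNvi := congrFun hNv i
      simp only [Matrix.mulVec, dotProduct, Pi.zero_apply] at hNvi
      rw [hwcoe, ← Matrix.mulVecLin_apply, map_sum]
      simp only [_root_.map_smul, Matrix.mulVecLin_apply]
      rw [dot_sum_right]
      simp only [dotProduct_smul, smul_eq_mul]
      rw [← hNvi]
      exact Finset.sum_congr rfl fun j _ => by rw [mul_comm]; rfl
    have hpairW : ∀ y ∈ W, (y : m → ℂ) ⬝ᵥ M *ᵥ (w : m → ℂ) = 0 := by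
      intro y hy
      have hrepr := b.sum_repr ⟨y, hy⟩
      have hyeq : y = ∑ i, b.repr ⟨y, hy⟩ i • (b i : m → ℂ) := by
        conv_lhs => rw [show y = ((⟨y, hy⟩ : W) : m → ℂ) from rfl, ← hrepr]
        push_cast
        rfl
      rw [hyeq, sum_dot_left]
      refine Finset.sum_eq_zero fun i _ => ?_
      rw [smul_dotProduct, hpair i, smul_zero]
    have hwK : (w : m → ℂ) ∈ K := by
      rw [hK, LinearMap.mem_ker, Matrix.mulVecLin_apply]
      have hall : ∀ x : m → ℂ, x ⬝ᵥ M *ᵥ (w : m → ℂ) = 0 := by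
        intro x
        have hx : x ∈ K ⊔ W := by rw [hW.sup_eq_top]; trivial
        obtain ⟨k, hk, y, hy, rfl⟩ := Submodule.mem_sup.mp hx
        rw [add_dotProduct, hpairW y hy, add_zero, skew_dot M h]
        have hk0 : M *ᵥ k = 0 := hk
        rw [hk0, dotProduct_zero, neg_zero]
      funext i
      have := hall (Pi.single i 1)
      rwa [single_dotProduct, one_mul] at this
    have hw0 : w = 0 := by
      have : (w : m → ℂ) ∈ K ⊓ W := ⟨hwK, w.2⟩
      rw [hW.inf_eq_bot] at this
      exact Subtype.ext this
    apply hv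
    have hli := b.linearIndependent
    rw [Fintype.linearIndependent_iff] at hli
    funext j
    exact hli v (by rw [← hw]; exact hw0) j
  have hNskew : Nᵀ = -N := by
    ext i j
    simp only [Matrix.transpose_apply, Matrix.neg_apply, hN, Matrix.of_apply]
    rw [skew_dot M h]
  rcases Nat.even_or_odd d with he | ho
  · exact he
  · exfalso
    apply hdet
    have h1 : N.det = -N.det := by
      conv_lhs => rw [← Matrix.det_transpose, hNskew, Matrix.det_neg]
      simp [Fintype.card_fin, Odd.neg_one_pow ho]
    exact CharZero.eq_neg_self_iff.mp h1


/-- For an invertible alternating `2n × 2n` complex matrix `A` and an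
alternating matrix `B`, every eigenvalue of `R = B·A⁻¹` has even geometric multiplicity. -/
theorem recursion_operator_even_geometric_multiplicity
    (n : ℕ) (A B : Matrix (Fin (2 * n)) (Fin (2 * n)) ℂ)
    (hA : Aᵀ = -A) (hA0 : ∀ i, A i i = 0) (hAinv : IsUnit A.det)
    (hB : Bᵀ = -B) (hB0 : ∀ i, B i i = 0) :
    ∀ lam : ℂ,
      Even (Module.finrank ℂ
        (LinearMap.ker (Matrix.mulVecLin (B * A⁻¹ - lam • (1 : Matrix (Fin (2 * n)) (Fin (2 * n)) ℂ))))) := by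
  intro lam
  set C : Matrix (Fin (2 * n)) (Fin (2 * n)) ℂ := B - lam • A with hC
  have hCskew : Cᵀ = -C := by
    rw [hC, Matrix.transpose_sub, Matrix.transpose_smul, hA, hB]
    simp [smul_neg]
    abel
  have hfact : B * A⁻¹ - lam • (1 : Matrix (Fin (2 * n)) (Fin (2 * n)) ℂ) = C * A⁻¹ := by
    rw [hC, Matrix.sub_mul, Matrix.smul_mul, Matrix.mul_nonsing_inv A hAinv]
  rw [hfact]
  have hrk : (C * A⁻¹).rank = C.rank :=
    Matrix.rank_mul_eq_left_of_isUnit_det A⁻¹ C (Matrix.isUnit_nonsing_inv_det A hAinv)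
  have hEvenRank : Even C.rank := skew_rank_even C hCskew
  -- rank-nullity
  have h1 : (C * A⁻¹).rank + finrank ℂ (LinearMap.ker (C * A⁻¹).mulVecLin)
      = finrank ℂ (Fin (2 * n) → ℂ) := by
    rw [Matrix.rank]; exact LinearMap.finrank_range_add_finrank_ker _
  rw [finrank_pi, Fintype.card_fin] at h1
  have h2 : Even ((C * A⁻¹).rank) := hrk ▸ hEvenRank
  rcases h2 with ⟨r, hr⟩
  refine ⟨n - r, ?_⟩
  omega
end

section
/- Let V be a real vector space equipped with three endomorphisms I₁, I₂, I₃ satisfying I₁² = I₂² = I₃² = −id and I₁I₂ = I₃ = −I₂I₁ (quaternionic relations). Then an ℝ-linear endomorphism A of V satisfies I₁AI₁ + I₂AI₂ + I₃AI₃ = A if and only if A = I₁A₁ + I₂A₂ + I₃A₃ for some endomorphisms A₁, A₂, A₃ each of which commutes with I₁, I₂ and I₃. -/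
/-- Haydys: on a vector space with a quaternionic structure `I₁, I₂, I₃`, an
endomorphism `A` satisfies `I₁AI₁ + I₂AI₂ + I₃AI₃ = A` (is aquaternionic) iff
`A = I₁A₁ + I₂A₂ + I₃A₃` with each `Aᵢ` commuting with `I₁, I₂, I₃` (quaternionic). -/
theorem aquaternionic_iff_sum_of_quaternionic
    {V : Type*} [AddCommGroup V] [Module ℝ V]
    (I₁ I₂ I₃ : Module.End ℝ V)
    (h1 : I₁ * I₁ = -1) (h2 : I₂ * I₂ = -1) (h3 : I₃ * I₃ = -1)
    (h12 : I₁ * I₂ = I₃) (h21 : I₂ * I₁ = -I₃)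
    (A : Module.End ℝ V) :
    I₁ * A * I₁ + I₂ * A * I₂ + I₃ * A * I₃ = A ↔
      ∃ A₁ A₂ A₃ : Module.End ℝ V,
        (Commute A₁ I₁ ∧ Commute A₁ I₂ ∧ Commute A₁ I₃) ∧
        (Commute A₂ I₁ ∧ Commute A₂ I₂ ∧ Commute A₂ I₃) ∧
        (Commute A₃ I₁ ∧ Commute A₃ I₂ ∧ Commute A₃ I₃) ∧
        A = I₁ * A₁ + I₂ * A₂ + I₃ * A₃ := by
  have h13 : I₁ * I₃ = -I₂ := by rw [← h12, ← mul_assoc, h1, neg_one_mul]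
  have h32 : I₃ * I₂ = -I₁ := by rw [← h12, mul_assoc, h2, mul_neg_one]
  have h31 : I₃ * I₁ = I₂ := by
    rw [← h12, mul_assoc, h21, mul_neg, h13, neg_neg]
  have h23 : I₂ * I₃ = I₁ := by
    rw [← h12, ← mul_assoc, h21, neg_mul, h32, neg_neg]
  have m11 : ∀ x : Module.End ℝ V, I₁ * (I₁ * x) = -x := fun x => by
    rw [← mul_assoc, h1, neg_one_mul]
  have m22 : ∀ x : Module.End ℝ V, I₂ * (I₂ * x) = -x := fun x => by
    rw [← mul_assoc, h2, neg_one_mul]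
  have m33 : ∀ x : Module.End ℝ V, I₃ * (I₃ * x) = -x := fun x => by
    rw [← mul_assoc, h3, neg_one_mul]
  have m12 : ∀ x : Module.End ℝ V, I₁ * (I₂ * x) = I₃ * x := fun x => by
    rw [← mul_assoc, h12]
  have m21 : ∀ x : Module.End ℝ V, I₂ * (I₁ * x) = -(I₃ * x) := fun x => by
    rw [← mul_assoc, h21, neg_mul]
  have m13 : ∀ x : Module.End ℝ V, I₁ * (I₃ * x) = -(I₂ * x) := fun x => by
    rw [← mul_assoc, h13, neg_mul]
  have m31 : ∀ x : Module.End ℝ V, I₃ * (I₁ * x) = I₂ * x := fun x => by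
    rw [← mul_assoc, h31]
  have m23 : ∀ x : Module.End ℝ V, I₂ * (I₃ * x) = I₁ * x := fun x => by
    rw [← mul_assoc, h23]
  have m32 : ∀ x : Module.End ℝ V, I₃ * (I₂ * x) = -(I₁ * x) := fun x => by
    rw [← mul_assoc, h32, neg_mul]
  constructor
  · intro h
    refine ⟨((1:ℝ)/4) • (-(I₁*A) - A*I₁ - I₃*A*I₂ + I₂*A*I₃),
            ((1:ℝ)/4) • (-(I₂*A) - A*I₂ - I₁*A*I₃ + I₃*A*I₁),
            ((1:ℝ)/4) • (-(I₃*A) - A*I₃ - I₂*A*I₁ + I₁*A*I₂),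
            ⟨?_, ?_, ?_⟩, ⟨?_, ?_, ?_⟩, ⟨?_, ?_, ?_⟩, ?_⟩ <;>
      [skip; skip; skip; skip; skip; skip; skip; skip; skip; skip]
    case _ =>
      show _ = _
      simp only [smul_mul_assoc, mul_smul_comm, sub_mul, add_mul, neg_mul, mul_neg,
        mul_sub, mul_add, mul_assoc, m11, m22, m33, m12, m21, m13, m31, m23, m32,
        h1, h2, h3, h12, h21, h13, h31, h23, h32, mul_neg_one, neg_one_mul, mul_one, one_mul,
        neg_neg]
      module
    case _ =>
      show _ = _
      simp only [smul_mul_assoc, mul_smul_comm, sub_mul, add_mul, neg_mul, mul_neg,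
        mul_sub, mul_add, mul_assoc, m11, m22, m33, m12, m21, m13, m31, m23, m32,
        h1, h2, h3, h12, h21, h13, h31, h23, h32, mul_neg_one, neg_one_mul, mul_one, one_mul,
        neg_neg]
      module
    case _ =>
      show _ = _
      simp only [smul_mul_assoc, mul_smul_comm, sub_mul, add_mul, neg_mul, mul_neg,
        mul_sub, mul_add, mul_assoc, m11, m22, m33, m12, m21, m13, m31, m23, m32,
        h1, h2, h3, h12, h21, h13, h31, h23, h32, mul_neg_one, neg_one_mul, mul_one, one_mul,
        neg_neg]
      module
    case _ =>
      show _ = _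
      simp only [smul_mul_assoc, mul_smul_comm, sub_mul, add_mul, neg_mul, mul_neg,
        mul_sub, mul_add, mul_assoc, m11, m22, m33, m12, m21, m13, m31, m23, m32,
        h1, h2, h3, h12, h21, h13, h31, h23, h32, mul_neg_one, neg_one_mul, mul_one, one_mul,
        neg_neg]
      module
    case _ =>
      show _ = _
      simp only [smul_mul_assoc, mul_smul_comm, sub_mul, add_mul, neg_mul, mul_neg,
        mul_sub, mul_add, mul_assoc, m11, m22, m33, m12, m21, m13, m31, m23, m32,
        h1, h2, h3, h12, h21, h13, h31, h23, h32, mul_neg_one, neg_one_mul, mul_one, one_mul,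
        neg_neg]
      module
    case _ =>
      show _ = _
      simp only [smul_mul_assoc, mul_smul_comm, sub_mul, add_mul, neg_mul, mul_neg,
        mul_sub, mul_add, mul_assoc, m11, m22, m33, m12, m21, m13, m31, m23, m32,
        h1, h2, h3, h12, h21, h13, h31, h23, h32, mul_neg_one, neg_one_mul, mul_one, one_mul,
        neg_neg]
      module
    case _ =>
      show _ = _
      simp only [smul_mul_assoc, mul_smul_comm, sub_mul, add_mul, neg_mul, mul_neg,
        mul_sub, mul_add, mul_assoc, m11, m22, m33, m12, m21, m13, m31, m23, m32,
        h1, h2, h3, h12, h21, h13, h31, h23, h32, mul_neg_one, neg_one_mul, mul_one, one_mul,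
        neg_neg]
      module
    case _ =>
      show _ = _
      simp only [smul_mul_assoc, mul_smul_comm, sub_mul, add_mul, neg_mul, mul_neg,
        mul_sub, mul_add, mul_assoc, m11, m22, m33, m12, m21, m13, m31, m23, m32,
        h1, h2, h3, h12, h21, h13, h31, h23, h32, mul_neg_one, neg_one_mul, mul_one, one_mul,
        neg_neg]
      module
    case _ =>
      show _ = _
      simp only [smul_mul_assoc, mul_smul_comm, sub_mul, add_mul, neg_mul, mul_neg,
        mul_sub, mul_add, mul_assoc, m11, m22, m33, m12, m21, m13, m31, m23, m32,
        h1, h2, h3, h12, h21, h13, h31, h23, h32, mul_neg_one, neg_one_mul, mul_one, one_mul,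
        neg_neg]
      module
    case _ =>
      have key : I₁ * (-(I₁*A) - A*I₁ - I₃*A*I₂ + I₂*A*I₃)
          + I₂ * (-(I₂*A) - A*I₂ - I₁*A*I₃ + I₃*A*I₁)
          + I₃ * (-(I₃*A) - A*I₃ - I₂*A*I₁ + I₁*A*I₂)
          = (3:ℝ) • A + (I₁ * A * I₁ + I₂ * A * I₂ + I₃ * A * I₃) := by
        simp only [sub_mul, add_mul, neg_mul, mul_neg,
          mul_sub, mul_add, mul_assoc, m11, m22, m33, m12, m21, m13, m31, m23, m32,
          h1, h2, h3, h12, h21, h13, h31, h23, h32, mul_neg_one, neg_one_mul, mul_one,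
          one_mul, neg_neg]
        module
      rw [mul_smul_comm, mul_smul_comm, mul_smul_comm, ← smul_add, ← smul_add, key, h]
      module
  · rintro ⟨A₁, A₂, A₃, ⟨c11, c12, c13⟩, ⟨c21, c22, c23⟩, ⟨c31, c32, c33⟩, rfl⟩
    simp only [mul_add, add_mul, mul_assoc, neg_mul, mul_neg,
      c11.eq, c12.eq, c13.eq, c21.eq, c22.eq, c23.eq, c31.eq, c32.eq, c33.eq,
      m11, m22, m33, m12, m21, m13, m31, m23, m32, neg_neg]
    abel
end
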